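/- Let (R,m) be a Noetherian local ring of prime characteristic p and N ⊆ M finitely generated R-modules. The special part of Frobenius closure, N^Fsp_M = { z ∈ M : there exists a power q = p^e with z^q ∈ m·N^[q]_M }, is a submodule of M. -/

import Mathlib

open TensorProduct

/-- `R` viewed as an `R`-algebra via the `e`-th iterate of the Frobenius endomorphism. -/
def FrobTwist (R : Type*) [CommRing R] (p : ℕ) [Fact p.Prime] [CharP R p] (_e : ℕ) :
    Type _ := R

instance (R : Type*) [CommRing R] (p : ℕ) [Fact p.Prime] [CharP R p] (e : ℕ) :
    CommRing (FrobTwist R p e) := ‹CommRing R›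

noncomputable instance (R : Type*) [CommRing R] (p : ℕ) [Fact p.Prime] [CharP R p] (e : ℕ) :
    Algebra R (FrobTwist R p e) := (iterateFrobenius R p e).toAlgebra

/-- The `e`-th Frobenius functor applied to the `R`-module `M`:
`F^e(M) = FrobTwist R p e ⊗[R] M`, a module over `FrobTwist R p e` (which is `R` as a ring). -/
def FrobModule (R : Type*) [CommRing R] (p : ℕ) [Fact p.Prime] [CharP R p]
    (M : Type*) [AddCommGroup M] [Module R M] (e : ℕ) : Type _ :=
  FrobTwist R p e ⊗[R] M

section
variable (R : Type*) [CommRing R] (p : ℕ) [Fact p.Prime] [CharP R p]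
  (M : Type*) [AddCommGroup M] [Module R M] (e : ℕ)

noncomputable instance : AddCommGroup (FrobModule R p M e) :=
  inferInstanceAs (AddCommGroup (FrobTwist R p e ⊗[R] M))

noncomputable instance : Module (FrobTwist R p e) (FrobModule R p M e) :=
  inferInstanceAs (Module (FrobTwist R p e) (FrobTwist R p e ⊗[R] M))

/-- The image `z^q := F^e(z)` of `z ∈ M` in `F^e(M)`. -/
noncomputable def frobMap (z : M) : FrobModule R p M e := (1 : FrobTwist R p e) ⊗ₜ[R] z

/-- The Frobenius power `N^{[q]}_M ⊆ F^e(M)` of a submodule `N ⊆ M`, `q = p^e`. -/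
noncomputable def frobPow (N : Submodule R M) : Submodule (FrobTwist R p e) (FrobModule R p M e) :=
  Submodule.span (FrobTwist R p e) (frobMap R p M e '' N)

/-- An ideal of `R`, regarded as an ideal of `FrobTwist R p e` (the same ring). -/
def idealTwist (I : Ideal R) : Ideal (FrobTwist R p e) := I

/-- The Frobenius closure `N^F_M` of a submodule `N ⊆ M`, as a set. -/
noncomputable def frobClSet (N : Submodule R M) : Set M :=
  {z | ∃ e : ℕ, frobMap R p M e z ∈ frobPow R p M e N}

/-- The special part of the Frobenius closure `N^{Fsp}_M`, as a set:
elements `z` with `z^q ∈ m·N^{[q]}_M` for some `q = p^e`. -/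
noncomputable def frobSpSet [IsLocalRing R] (N : Submodule R M) : Set M :=
  {z | ∃ e : ℕ, frobMap R p M e z ∈
    idealTwist R p e (IsLocalRing.maximalIdeal R) • frobPow R p M e N}

end

section Aux

variable (R : Type*) [CommRing R] (p : ℕ) [Fact p.Prime] [CharP R p]
  (M : Type*) [AddCommGroup M] [Module R M] (e : ℕ)

noncomputable instance : Module R (FrobModule R p M e) :=
  inferInstanceAs (Module R (FrobTwist R p e ⊗[R] M))

/-- The Frobenius on the twist, as an `R`-linear map `FrobTwist e → FrobTwist (e+1)`. -/
noncomputable def stepLin : FrobTwist R p e →ₗ[R] FrobTwist R p (e + 1) where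
  toFun x := frobenius R p x
  map_add' x y := map_add (frobenius R p) x y
  map_smul' r x := by
    have key : ∀ a b : R, frobenius R p (iterateFrobenius R p e a * b)
        = iterateFrobenius R p (e + 1) a * frobenius R p b := by
      intro a b
      simp only [frobenius_def, iterateFrobenius_def, mul_pow, ← pow_mul, pow_succ]
    exact key r x

lemma stepLin_mul (x y : FrobTwist R p e) :
    stepLin R p e (x * y) = stepLin R p e x * stepLin R p e y :=
  map_mul (frobenius R p) x y

lemma stepLin_one : stepLin R p e (1 : FrobTwist R p e) = 1 :=
  map_one (frobenius R p)

/-- The induced map `F^e(M) → F^{e+1}(M)`, sending `x ⊗ m` to `x^p ⊗ m`. -/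
noncomputable def frobStep : FrobModule R p M e →ₗ[R] FrobModule R p M (e + 1) :=
  LinearMap.rTensor M (stepLin R p e)

lemma frobStep_tmul (x : FrobTwist R p e) (m : M) :
    frobStep R p M e (x ⊗ₜ[R] m) = stepLin R p e x ⊗ₜ[R] m := rfl

lemma frobStep_smul (b : FrobTwist R p e) (t : FrobModule R p M e) :
    frobStep R p M e (b • t) = stepLin R p e b • frobStep R p M e t := by
  induction t using TensorProduct.induction_on with
  | zero =>
      erw [smul_zero (A := FrobTwist R p e ⊗[R] M), map_zero]
      exact (smul_zero (A := FrobTwist R p (e + 1) ⊗[R] M) _).symm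
  | tmul x m =>
      erw [TensorProduct.smul_tmul', frobStep_tmul, frobStep_tmul, TensorProduct.smul_tmul',
        smul_eq_mul, smul_eq_mul, stepLin_mul]
  | add s t hs ht =>
      erw [smul_add, map_add, map_add, hs, ht, smul_add]

lemma frobStep_frobMap (z : M) :
    frobStep R p M e (frobMap R p M e z) = frobMap R p M (e + 1) z := by
  show frobStep R p M e ((1 : FrobTwist R p e) ⊗ₜ[R] z) = (1 : FrobTwist R p (e + 1)) ⊗ₜ[R] z
  rw [frobStep_tmul, stepLin_one]

lemma frobStep_mem (I : Ideal R) (N : Submodule R M) (t : FrobModule R p M e)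
    (ht : t ∈ idealTwist R p e I • frobPow R p M e N) :
    frobStep R p M e t ∈ idealTwist R p (e + 1) I • frobPow R p M (e + 1) N := by
  refine Submodule.smul_induction_on ht ?_ ?_
  · intro a ha s hs
    rw [frobStep_smul]
    have ha' : stepLin R p e a ∈ idealTwist R p (e + 1) I := by
      show (show R from a) ^ p ∈ I
      exact Ideal.pow_mem_of_mem I ha p (Fact.out : p.Prime).pos
    refine Submodule.smul_mem_smul ha' ?_
    refine Submodule.span_induction ?_ ?_ ?_ ?_ hs
    · rintro _ ⟨n, hn, rfl⟩
      rw [frobStep_frobMap]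
      exact Submodule.subset_span ⟨n, hn, rfl⟩
    · rw [map_zero]; exact (frobPow R p M (e + 1) N).zero_mem
    · intro u v _ _ hu hv
      rw [map_add]; exact add_mem hu hv
    · intro b u _ hu
      rw [frobStep_smul]
      exact Submodule.smul_mem _ _ hu
  · intro u v hu hv
    rw [map_add]; exact add_mem hu hv

lemma frobMem_mono (I : Ideal R) (N : Submodule R M) (z : M) {e₀ e' : ℕ} (h : e₀ ≤ e')
    (hz : frobMap R p M e₀ z ∈ idealTwist R p e₀ I • frobPow R p M e₀ N) :
    frobMap R p M e' z ∈ idealTwist R p e' I • frobPow R p M e' N := by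
  induction e' with
  | zero => exact (Nat.le_zero.mp h) ▸ hz
  | succ k ih =>
      rcases Nat.lt_or_ge e₀ (k + 1) with hlt | hge
      · have hk := ih (Nat.lt_succ_iff.mp hlt)
        have := frobStep_mem R p M k I N _ hk
        rwa [frobStep_frobMap] at this
      · exact (Nat.le_antisymm h hge) ▸ hz

lemma frobMap_zero : frobMap R p M e (0 : M) = 0 := by
  show (1 : FrobTwist R p e) ⊗ₜ[R] (0 : M) = 0
  exact TensorProduct.tmul_zero _ _

lemma frobMap_add (z w : M) :
    frobMap R p M e (z + w) = frobMap R p M e z + frobMap R p M e w := by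
  show (1 : FrobTwist R p e) ⊗ₜ[R] (z + w) = _
  exact TensorProduct.tmul_add _ _ _

/-- `r^(p^e)` viewed in the twist. -/
noncomputable def twistElem (r : R) : FrobTwist R p e := iterateFrobenius R p e r

lemma frobMap_smul (r : R) (z : M) :
    frobMap R p M e (r • z) = twistElem R p e r • frobMap R p M e z := by
  show (1 : FrobTwist R p e) ⊗ₜ[R] (r • z)
      = twistElem R p e r • ((1 : FrobTwist R p e) ⊗ₜ[R] z)
  rw [TensorProduct.smul_tmul', ← TensorProduct.smul_tmul]
  congr 1

end Aux

/-- Over a Noetherian local ring `(R,m)` of prime characteristic `p`,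
for finitely generated modules `N ⊆ M`, the special part of Frobenius closure
`N^{Fsp}_M = {z ∈ M | ∃ q = p^e, z^q ∈ m·N^{[q]}_M}` is a submodule of `M`. -/
theorem frobSp_isSubmodule
    (R : Type*) [CommRing R] [IsNoetherianRing R] [IsLocalRing R]
    (p : ℕ) [Fact p.Prime] [CharP R p]
    (M : Type*) [AddCommGroup M] [Module R M] [Module.Finite R M]
    (N : Submodule R M) :
    ∃ S : Submodule R M, (S : Set M) = frobSpSet R p M N := by
  refine ⟨
    { carrier := frobSpSet R p M N
      zero_mem' := ⟨0, by
        rw [frobMap_zero]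
        exact Submodule.zero_mem _⟩
      add_mem' := ?_
      smul_mem' := ?_ }, rfl⟩
  · rintro z w ⟨e₁, h₁⟩ ⟨e₂, h₂⟩
    refine ⟨max e₁ e₂, ?_⟩
    have h₁' := frobMem_mono R p M (IsLocalRing.maximalIdeal R) N z (le_max_left e₁ e₂) h₁
    have h₂' := frobMem_mono R p M (IsLocalRing.maximalIdeal R) N w (le_max_right e₁ e₂) h₂
    rw [frobMap_add]
    exact add_mem h₁' h₂'
  · rintro r z ⟨e, h⟩
    refine ⟨e, ?_⟩
    rw [frobMap_smul]
    exact Submodule.smul_mem _ _ h
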